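/- Assume (i) for every x ∈ dom h, φ(x) ≥ E[φ(w) + ⟨v, x − w⟩ − η], and (ii) E[φ(w) + (1/(2λ))‖w − z̄‖² − G − (1/(2λ))‖z − z̄‖²] ≤ ε. Then with probability at least 3/4, φ(w) + (1/(2λ))‖w − z̄‖² − φ(ẑ) − (1/(2λ))‖ẑ − z̄‖² + ((1+λμ)/(λ(2+λμ)))‖ẑ − z‖² ≤ 8ε. -/

import Mathlib

open MeasureTheory
open scoped RealInnerProductSpace ENNReal

set_option maxHeartbeats 1000000 in
/-- In the setting of Statement 13, with moreover
`ẑ = argmin { φ(x) + (1/(2λ))‖x - z̄‖² }`, assumptions (i) and (ii) imply that with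
probability at least `3/4`,
`φ(w) + (1/(2λ))‖w - z̄‖² - φ(ẑ) - (1/(2λ))‖ẑ - z̄‖² + ((1+λμ)/(λ(2+λμ)))‖ẑ - z‖² ≤ 8ε`. -/
theorem stmt_14 {d : ℕ} {Ω : Type*} [MeasurableSpace Ω] (P : Measure Ω)
    [IsProbabilityMeasure P]
    (f : EuclideanSpace ℝ (Fin d) → ℝ) (hf : Differentiable ℝ f)
    (μ : ℝ) (hμ : 0 < μ)
    (hsc : ConvexOn ℝ Set.univ (fun x => f x - μ / 2 * ‖x‖ ^ 2))
    (s : Set (EuclideanSpace ℝ (Fin d))) (hs : s.Nonempty) (hcl : IsClosed s)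
    (hbd : Bornology.IsBounded s)
    (h : EuclideanSpace ℝ (Fin d) → ℝ) (hconv : ConvexOn ℝ s h)
    (hlsc : LowerSemicontinuousOn h s)
    (lam : ℝ) (hlam : 0 < lam) (zbar : EuclideanSpace ℝ (Fin d)) (hzbar : zbar ∈ s)
    (ε : ℝ) (hε : 0 < ε)
    -- `ẑ` is the minimizer of the proximal subproblem:
    (zhat : EuclideanSpace ℝ (Fin d)) (hzhat_mem : zhat ∈ s)
    (hzhat_min : ∀ x ∈ s,
      (f zhat + h zhat) + 1 / (2 * lam) * ‖zhat - zbar‖ ^ 2 ≤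
        (f x + h x) + 1 / (2 * lam) * ‖x - zbar‖ ^ 2)
    (w z : Ω → EuclideanSpace ℝ (Fin d)) (G : Ω → ℝ)
    (hw_meas : AEStronglyMeasurable w P) (hz_meas : AEStronglyMeasurable z P)
    (hG_meas : AEStronglyMeasurable G P)
    (hws : ∀ᵐ ω ∂P, w ω ∈ s) (hzs : ∀ᵐ ω ∂P, z ω ∈ s)
    (hG_int : Integrable G P)
    (hφw_int : Integrable (fun ω => f (w ω) + h (w ω)) P)
    (hη_int : Integrable (fun ω =>
      (f (w ω) + h (w ω)) - G ω - ⟪lam⁻¹ • (zbar - z ω), w ω - z ω⟫) P)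
    -- (i)
    (hyp1 : ∀ x ∈ s,
      ∫ ω, ((f (w ω) + h (w ω)) + ⟪lam⁻¹ • (zbar - z ω), x - w ω⟫ -
        ((f (w ω) + h (w ω)) - G ω - ⟪lam⁻¹ • (zbar - z ω), w ω - z ω⟫)) ∂P ≤ f x + h x)
    -- (ii)
    (hyp2 : ∫ ω, ((f (w ω) + h (w ω)) + 1 / (2 * lam) * ‖w ω - zbar‖ ^ 2 - G ω -
      1 / (2 * lam) * ‖z ω - zbar‖ ^ 2) ∂P ≤ ε) :
    (3 : ℝ≥0∞) / 4 ≤ P {ω |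
      (f (w ω) + h (w ω)) + 1 / (2 * lam) * ‖w ω - zbar‖ ^ 2 -
        ((f zhat + h zhat) + 1 / (2 * lam) * ‖zhat - zbar‖ ^ 2) +
        (1 + lam * μ) / (lam * (2 + lam * μ)) * ‖zhat - z ω‖ ^ 2 ≤ 8 * ε} := by
  classical
  have hlam' : lam ≠ 0 := ne_of_gt hlam
  have h2lm : 0 < 2 + lam * μ := by positivity
  set c : ℝ := (1 + lam * μ) / (lam * (2 + lam * μ)) with hc_def
  have hc : 0 < c := by positivity
  set Φz : ℝ := (f zhat + h zhat) + 1 / (2 * lam) * ‖zhat - zbar‖ ^ 2 with hΦz_def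
  -- bound on s
  obtain ⟨R, hR⟩ := hbd.exists_norm_le
  -- measurability and integrability of the squared norms
  have hwz_meas : AEStronglyMeasurable (fun ω => w ω - zbar) P :=
    hw_meas.sub aestronglyMeasurable_const
  have hzz_meas : AEStronglyMeasurable (fun ω => z ω - zbar) P :=
    hz_meas.sub aestronglyMeasurable_const
  have hzhz_meas : AEStronglyMeasurable (fun ω => zhat - z ω) P :=
    aestronglyMeasurable_const.sub hz_meas
  have hnw_meas : AEStronglyMeasurable (fun ω => ‖w ω - zbar‖ ^ 2) P := by
    simpa [pow_two, Pi.mul_def] using hwz_meas.norm.mul hwz_meas.norm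
  have hnz_meas : AEStronglyMeasurable (fun ω => ‖z ω - zbar‖ ^ 2) P := by
    simpa [pow_two, Pi.mul_def] using hzz_meas.norm.mul hzz_meas.norm
  have hnzz_meas : AEStronglyMeasurable (fun ω => ‖zhat - z ω‖ ^ 2) P := by
    simpa [pow_two, Pi.mul_def] using hzhz_meas.norm.mul hzhz_meas.norm
  have key_bound : ∀ (x y : EuclideanSpace ℝ (Fin d)), x ∈ s →
      ‖‖x - y‖ ^ 2‖ ≤ (R + ‖y‖) ^ 2 := by
    intro x y hx
    rw [Real.norm_of_nonneg (by positivity)]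
    have h1 : ‖x - y‖ ≤ ‖x‖ + ‖y‖ := norm_sub_le _ _
    have h2 : ‖x‖ ≤ R := hR x hx
    have h0 : (0:ℝ) ≤ ‖x - y‖ := norm_nonneg _
    nlinarith [norm_nonneg y]
  have hI_nw : Integrable (fun ω => ‖w ω - zbar‖ ^ 2) P := by
    refine Integrable.mono' (integrable_const ((R + ‖zbar‖) ^ 2)) hnw_meas ?_
    filter_upwards [hws] with ω hω using key_bound _ _ hω
  have hI_nz : Integrable (fun ω => ‖z ω - zbar‖ ^ 2) P := by
    refine Integrable.mono' (integrable_const ((R + ‖zbar‖) ^ 2)) hnz_meas ?_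
    filter_upwards [hzs] with ω hω using key_bound _ _ hω
  have hI_nzz : Integrable (fun ω => ‖zhat - z ω‖ ^ 2) P := by
    refine Integrable.mono' (integrable_const ((R + ‖zhat‖) ^ 2)) hnzz_meas ?_
    filter_upwards [hzs] with ω hω
    have := key_bound _ zhat hω
    simpa [norm_sub_rev] using this
  -- names for the integrals
  set IG : ℝ := ∫ ω, G ω ∂P with hIG_def
  set Iφ : ℝ := ∫ ω, (f (w ω) + h (w ω)) ∂P with hIφ_def
  set Inw : ℝ := ∫ ω, ‖w ω - zbar‖ ^ 2 ∂P with hInw_def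
  set Inz : ℝ := ∫ ω, ‖z ω - zbar‖ ^ 2 ∂P with hInz_def
  set J : ℝ := ∫ ω, ‖zhat - z ω‖ ^ 2 ∂P with hJ_def
  have hJ0 : 0 ≤ J := integral_nonneg fun ω => by positivity
  -- rewrite hyp1 at zhat
  have h1 : IG + 1 / (2 * lam) * (Inz + J - ‖zhat - zbar‖ ^ 2) ≤ f zhat + h zhat := by
    have e : (fun ω => (f (w ω) + h (w ω)) + ⟪lam⁻¹ • (zbar - z ω), zhat - w ω⟫ -
        ((f (w ω) + h (w ω)) - G ω - ⟪lam⁻¹ • (zbar - z ω), w ω - z ω⟫)) =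
        fun ω => G ω + 1 / (2 * lam) *
          (‖z ω - zbar‖ ^ 2 + ‖zhat - z ω‖ ^ 2 - ‖zhat - zbar‖ ^ 2) := by
      funext ω
      have i1 : ⟪lam⁻¹ • (zbar - z ω), zhat - w ω⟫ + ⟪lam⁻¹ • (zbar - z ω), w ω - z ω⟫
          = ⟪lam⁻¹ • (zbar - z ω), zhat - z ω⟫ := by
        rw [← inner_add_right]
        congr 1
        abel
      have i2 : ⟪lam⁻¹ • (zbar - z ω), zhat - z ω⟫ =
          lam⁻¹ * ⟪zbar - z ω, zhat - z ω⟫ := real_inner_smul_left _ _ _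
      have i3 : ‖(zbar - z ω) - (zhat - z ω)‖ ^ 2 =
          ‖zbar - z ω‖ ^ 2 - 2 * ⟪zbar - z ω, zhat - z ω⟫ + ‖zhat - z ω‖ ^ 2 :=
        norm_sub_sq_real _ _
      have i4 : (zbar - z ω) - (zhat - z ω) = zbar - zhat := by abel
      have i5 : ‖zbar - zhat‖ = ‖zhat - zbar‖ := norm_sub_rev _ _
      have i6 : ‖zbar - z ω‖ = ‖z ω - zbar‖ := norm_sub_rev _ _
      rw [i4, i5, i6] at i3
      have i7 : ⟪zbar - z ω, zhat - z ω⟫ =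
          (‖z ω - zbar‖ ^ 2 + ‖zhat - z ω‖ ^ 2 - ‖zhat - zbar‖ ^ 2) / 2 := by linarith
      have goal' : ⟪lam⁻¹ • (zbar - z ω), zhat - z ω⟫ =
          1 / (2 * lam) * (‖z ω - zbar‖ ^ 2 + ‖zhat - z ω‖ ^ 2 - ‖zhat - zbar‖ ^ 2) := by
        rw [i2, i7, one_div, mul_inv]; ring
      linarith [goal', i1]
    have h1' := hyp1 zhat hzhat_mem
    rw [e] at h1'
    have iA : Integrable (fun ω => ‖z ω - zbar‖ ^ 2 + ‖zhat - z ω‖ ^ 2) P :=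
      hI_nz.add hI_nzz
    have iB : Integrable (fun ω =>
        ‖z ω - zbar‖ ^ 2 + ‖zhat - z ω‖ ^ 2 - ‖zhat - zbar‖ ^ 2) P :=
      iA.sub (integrable_const _)
    have iC : Integrable (fun ω => 1 / (2 * lam) *
        (‖z ω - zbar‖ ^ 2 + ‖zhat - z ω‖ ^ 2 - ‖zhat - zbar‖ ^ 2)) P :=
      iB.const_mul _
    have split : ∫ ω, (G ω + 1 / (2 * lam) *
        (‖z ω - zbar‖ ^ 2 + ‖zhat - z ω‖ ^ 2 - ‖zhat - zbar‖ ^ 2)) ∂P =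
        IG + 1 / (2 * lam) * (Inz + J - ‖zhat - zbar‖ ^ 2) := by
      rw [integral_add hG_int iC, integral_const_mul,
        integral_sub iA (integrable_const _),
        integral_add hI_nz hI_nzz, integral_const]
      simp [hIG_def, hInz_def, hJ_def]
    rw [split] at h1'
    exact h1'
  -- rewrite hyp2
  have h2 : Iφ + 1 / (2 * lam) * Inw - IG - 1 / (2 * lam) * Inz ≤ ε := by
    have split : ∫ ω, ((f (w ω) + h (w ω)) + 1 / (2 * lam) * ‖w ω - zbar‖ ^ 2 - G ω -
        1 / (2 * lam) * ‖z ω - zbar‖ ^ 2) ∂P =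
        Iφ + 1 / (2 * lam) * Inw - IG - 1 / (2 * lam) * Inz := by
      have iD : Integrable (fun ω => 1 / (2 * lam) * ‖w ω - zbar‖ ^ 2) P :=
        hI_nw.const_mul _
      have iE : Integrable (fun ω => 1 / (2 * lam) * ‖z ω - zbar‖ ^ 2) P :=
        hI_nz.const_mul _
      have iF : Integrable (fun ω =>
          (f (w ω) + h (w ω)) + 1 / (2 * lam) * ‖w ω - zbar‖ ^ 2) P := hφw_int.add iD
      have iH : Integrable (fun ω =>
          (f (w ω) + h (w ω)) + 1 / (2 * lam) * ‖w ω - zbar‖ ^ 2 - G ω) P := iF.sub hG_int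
      rw [integral_sub iH iE, integral_sub iF hG_int, integral_add hφw_int iD,
        integral_const_mul, integral_const_mul]
    rw [split] at hyp2
    exact hyp2
  -- minimality: Φz ≤ Iφ + (1/(2λ)) Inw
  have h3 : Φz ≤ Iφ + 1 / (2 * lam) * Inw := by
    have mono : ∫ ω, (Φz : ℝ) ∂P ≤
        ∫ ω, ((f (w ω) + h (w ω)) + 1 / (2 * lam) * ‖w ω - zbar‖ ^ 2) ∂P := by
      refine integral_mono_ae (integrable_const _) (hφw_int.add (hI_nw.const_mul _)) ?_
      filter_upwards [hws] with ω hω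
      exact hzhat_min (w ω) hω
    have iD : Integrable (fun ω => 1 / (2 * lam) * ‖w ω - zbar‖ ^ 2) P :=
      hI_nw.const_mul _
    rw [integral_add hφw_int iD, integral_const_mul, integral_const] at mono
    simpa using mono
  -- J ≤ 2 λ ε
  have hJ : J ≤ 2 * lam * ε := by
    have hΦz' : IG + 1 / (2 * lam) * Inz + 1 / (2 * lam) * J ≤ Φz := by
      rw [hΦz_def]; nlinarith [h1]
    have step : 1 / (2 * lam) * J ≤ ε := by linarith
    have h2l : (0:ℝ) < 2 * lam := by positivity
    have : J = (2 * lam) * (1 / (2 * lam) * J) := by field_simp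
    rw [this]
    calc (2 * lam) * (1 / (2 * lam) * J) ≤ (2 * lam) * ε :=
      mul_le_mul_of_nonneg_left step h2l.le
    _ = 2 * lam * ε := by ring
  -- the random variable Y
  set Y : Ω → ℝ := fun ω =>
    (f (w ω) + h (w ω)) + 1 / (2 * lam) * ‖w ω - zbar‖ ^ 2 - Φz + c * ‖zhat - z ω‖ ^ 2
    with hY_def
  have hY_int : Integrable Y P := by
    have iD : Integrable (fun ω => 1 / (2 * lam) * ‖w ω - zbar‖ ^ 2) P :=
      hI_nw.const_mul _
    have iK : Integrable (fun ω => c * ‖zhat - z ω‖ ^ 2) P := hI_nzz.const_mul _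
    exact ((hφw_int.add iD).sub (integrable_const _)).add iK
  have hY_nonneg : 0 ≤ᵐ[P] Y := by
    filter_upwards [hws] with ω hω
    have hmin := hzhat_min (w ω) hω
    have hpos : 0 ≤ c * ‖zhat - z ω‖ ^ 2 := by positivity
    simp only [hY_def, Pi.zero_apply]
    linarith
  have hEY : ∫ ω, Y ω ∂P ≤ 2 * ε := by
    have split : ∫ ω, Y ω ∂P = Iφ + 1 / (2 * lam) * Inw - Φz + c * J := by
      simp only [hY_def]
      have iD : Integrable (fun ω => 1 / (2 * lam) * ‖w ω - zbar‖ ^ 2) P :=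
        hI_nw.const_mul _
      have iK : Integrable (fun ω => c * ‖zhat - z ω‖ ^ 2) P := hI_nzz.const_mul _
      have iF : Integrable (fun ω =>
          (f (w ω) + h (w ω)) + 1 / (2 * lam) * ‖w ω - zbar‖ ^ 2) P := hφw_int.add iD
      have iL : Integrable (fun ω =>
          (f (w ω) + h (w ω)) + 1 / (2 * lam) * ‖w ω - zbar‖ ^ 2 - Φz) P :=
        iF.sub (integrable_const _)
      rw [integral_add iL iK, integral_sub iF (integrable_const _), integral_add hφw_int iD,
        integral_const_mul, integral_const_mul, integral_const]
      simp [hIφ_def, hInw_def, hJ_def]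
    rw [split]
    have hΦz' : IG + 1 / (2 * lam) * Inz + 1 / (2 * lam) * J ≤ Φz := by
      rw [hΦz_def]; nlinarith [h1]
    have hk : c - 1 / (2 * lam) = μ / (2 * (2 + lam * μ)) := by
      rw [hc_def]; field_simp; ring
    have hkJ : (c - 1 / (2 * lam)) * J ≤ ε := by
      rw [hk]
      have hmul : μ / (2 * (2 + lam * μ)) * J ≤ μ / (2 * (2 + lam * μ)) * (2 * lam * ε) :=
        mul_le_mul_of_nonneg_left hJ (by positivity)
      have heq : μ / (2 * (2 + lam * μ)) * (2 * lam * ε) = (lam * μ / (2 + lam * μ)) * ε := by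
        field_simp
      have hle1 : lam * μ / (2 + lam * μ) ≤ 1 := by
        rw [div_le_one h2lm]; linarith
      nlinarith [hmul, heq, hle1, hε.le]
    nlinarith [hkJ]
  -- Markov's inequality
  have hMarkov := mul_meas_ge_le_integral_of_nonneg hY_nonneg hY_int (8 * ε)
  set T : Set Ω := {ω | 8 * ε ≤ Y ω} with hT_def
  have hTtoReal : (P T).toReal ≤ 1 / 4 := by
    have h8 : (0:ℝ) < 8 * ε := by positivity
    have hle := hMarkov.trans hEY
    nlinarith [ENNReal.toReal_nonneg (a := P T), measureReal_def P T]
  have hT : P T ≤ 1 / 4 := by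
    rw [← ENNReal.ofReal_toReal (measure_ne_top P T)]
    have h14 : ENNReal.ofReal ((1:ℝ)/4) = (1 : ℝ≥0∞) / 4 := by
      rw [ENNReal.ofReal_div_of_pos (by norm_num)]
      norm_num
    exact h14 ▸ ENNReal.ofReal_le_ofReal hTtoReal
  have hunion : (1 : ℝ≥0∞) ≤ P T + P Tᶜ := by
    calc (1 : ℝ≥0∞) = P Set.univ := (measure_univ).symm
    _ = P (T ∪ Tᶜ) := by rw [Set.union_compl_self]
    _ ≤ P T + P Tᶜ := measure_union_le _ _
  have hcompl : (3 : ℝ≥0∞) / 4 ≤ P Tᶜ := by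
    have hsum : (1:ℝ≥0∞)/4 + 3/4 = 1 := by
      rw [ENNReal.div_add_div_same]
      have e4 : (1:ℝ≥0∞) + 3 = 4 := by norm_num
      rw [e4]
      exact ENNReal.div_self (by norm_num) (by norm_num)
    have step : (1:ℝ≥0∞)/4 + 3/4 ≤ 1/4 + P Tᶜ := by
      rw [hsum]
      exact hunion.trans (add_le_add_left hT _)
    exact (ENNReal.add_le_add_iff_left (by norm_num)).mp step
  refine hcompl.trans (measure_mono ?_)
  intro ω hω
  simp only [hT_def, Set.mem_compl_iff, Set.mem_setOf_eq, not_le] at hω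
  simp only [Set.mem_setOf_eq]
  have hYω : Y ω < 8 * ε := hω
  simp only [hY_def] at hYω
  exact le_of_lt hYω
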